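/- Let w₁, w₂, w₃ be three affinely independent points of ℝ³ and let T = convexHull{w₁, w₂, w₃} be the triangle they span. Then for every affine map u : ℝ³ → ℝ, ∫_T u dμH[2] = μH[2](T) · (u(w₁) + u(w₂) + u(w₃))/3, where μH[2] is the 2-dimensional Hausdorff measure. This is the three-dimensional instance of Lemma 1 of the paper: integrating a linear finite element function over a triangular face of a tetrahedral cell is exact when the function is replaced by the arithmetic mean of its three nodal values on that face. -/

import Mathlib

open MeasureTheory Set
open scoped NNReal ENNReal

section Aux



/-- The closed standard triangle in `ℝ × ℝ`. -/
def stdTri2 : Set (ℝ × ℝ) := {p | 0 ≤ p.1 ∧ 0 ≤ p.2 ∧ p.1 + p.2 ≤ 1}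

lemma stdTri2_isClosed : IsClosed stdTri2 := by
  have h1 : IsClosed {p : ℝ × ℝ | 0 ≤ p.1} := isClosed_le continuous_const continuous_fst
  have h2 : IsClosed {p : ℝ × ℝ | 0 ≤ p.2} := isClosed_le continuous_const continuous_snd
  have h3 : IsClosed {p : ℝ × ℝ | p.1 + p.2 ≤ 1} :=
    isClosed_le (continuous_fst.add continuous_snd) continuous_const
  exact h1.inter (h2.inter h3)

lemma stdTri2_isCompact : IsCompact stdTri2 := by
  apply Metric.isCompact_of_isClosed_isBounded stdTri2_isClosed
  have hsub : stdTri2 ⊆ Icc (0:ℝ) 1 ×ˢ Icc (0:ℝ) 1 := by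
    rintro ⟨x, y⟩ ⟨hx, hy, hxy⟩
    exact ⟨⟨hx, by linarith⟩, ⟨hy, by linarith⟩⟩
  exact ((Metric.isBounded_Icc (0:ℝ) 1).prod (Metric.isBounded_Icc (0:ℝ) 1)).subset hsub

lemma stdTri2_measurableSet : MeasurableSet stdTri2 := stdTri2_isClosed.measurableSet

lemma integral_stdTri2 (a b c : ℝ) :
    ∫ p in stdTri2, (a + b * p.1 + c * p.2) = a / 2 + b / 6 + c / 6 := by
  have hcont : Continuous fun p : ℝ × ℝ => a + b * p.1 + c * p.2 := by fun_prop
  have hint : IntegrableOn (fun p : ℝ × ℝ => a + b * p.1 + c * p.2) stdTri2 volume :=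
    hcont.continuousOn.integrableOn_compact stdTri2_isCompact
  rw [← integral_indicator stdTri2_measurableSet, Measure.volume_eq_prod,
    integral_prod _ (by
      rw [← Measure.volume_eq_prod]
      rwa [integrable_indicator_iff stdTri2_measurableSet])]
  have key : ∀ x : ℝ, (∫ y : ℝ, stdTri2.indicator (fun p => a + b * p.1 + c * p.2) (x, y))
      = (Icc (0:ℝ) 1).indicator (fun x => (a + b * x) * (1 - x) + c * (1 - x) ^ 2 / 2) x := by
    intro x
    have hrw : (fun y : ℝ => stdTri2.indicator (fun p => a + b * p.1 + c * p.2) (x, y))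
        = ({y : ℝ | (x, y) ∈ stdTri2}).indicator (fun y => a + b * x + c * y) := by
      funext y
      by_cases h : (x, y) ∈ stdTri2 <;> simp [Set.indicator, h]
    rw [hrw]
    by_cases hx0 : 0 ≤ x
    · have hset : {y : ℝ | (x, y) ∈ stdTri2} = Icc 0 (1 - x) := by
        ext y
        constructor
        · rintro ⟨_, hy, hxy⟩; exact ⟨hy, by linarith⟩
        · rintro ⟨hy, hy'⟩; exact ⟨hx0, hy, by linarith⟩
      rw [hset, integral_indicator measurableSet_Icc]
      by_cases hx1 : x ≤ 1
      · rw [integral_Icc_eq_integral_Ioc, ← intervalIntegral.integral_of_le (by linarith)]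
        have : (∫ y in (0:ℝ)..(1 - x), (a + b * x + c * y))
            = (a + b * x) * (1 - x) + c * (1 - x) ^ 2 / 2 := by
          have i5 : IntervalIntegrable (fun _ : ℝ => a + b * x) volume 0 (1 - x) :=
            intervalIntegrable_const
          have i6 : IntervalIntegrable (fun y : ℝ => c * y) volume 0 (1 - x) :=
            Continuous.intervalIntegrable (by fun_prop) _ _
          rw [intervalIntegral.integral_add i5 i6,
            intervalIntegral.integral_const, intervalIntegral.integral_const_mul, integral_id]
          simp only [smul_eq_mul]
          ring
        rw [this, Set.indicator_of_mem (by exact ⟨hx0, hx1⟩)]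
      · rw [Set.Icc_eq_empty (by intro h; exact hx1 (by linarith)), Measure.restrict_empty,
          integral_zero_measure, Set.indicator_of_notMem (by simp [hx1])]
    · have hset : {y : ℝ | (x, y) ∈ stdTri2} = ∅ := by
        ext y; simp only [mem_setOf_eq, mem_empty_iff_false, iff_false]
        rintro ⟨hx, _, _⟩; exact hx0 hx
      rw [hset, Set.indicator_empty, integral_zero,
        Set.indicator_of_notMem (by simp [hx0])]
  simp only [key]
  rw [integral_indicator measurableSet_Icc, integral_Icc_eq_integral_Ioc,
    ← intervalIntegral.integral_of_le zero_le_one]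
  have : ∀ x : ℝ, (a + b * x) * (1 - x) + c * (1 - x) ^ 2 / 2
      = (a + c / 2) + ((b - a - c) * x + (c / 2 - b) * x ^ 2) := fun x => by ring
  simp_rw [this]
  have i1 : IntervalIntegrable (fun _ : ℝ => a + c / 2) volume 0 1 := intervalIntegrable_const
  have i2 : IntervalIntegrable (fun x : ℝ => (b - a - c) * x + (c / 2 - b) * x ^ 2) volume 0 1 :=
    Continuous.intervalIntegrable (by fun_prop) _ _
  have i3 : IntervalIntegrable (fun x : ℝ => (b - a - c) * x) volume 0 1 :=
    Continuous.intervalIntegrable (by fun_prop) _ _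
  have i4 : IntervalIntegrable (fun x : ℝ => (c / 2 - b) * x ^ 2) volume 0 1 :=
    Continuous.intervalIntegrable (by fun_prop) _ _
  rw [intervalIntegral.integral_add i1 i2, intervalIntegral.integral_add i3 i4,
    intervalIntegral.integral_const, intervalIntegral.integral_const_mul,
    intervalIntegral.integral_const_mul, integral_id, integral_pow]
  norm_num
  ring


noncomputable def chi : EuclideanSpace ℝ (Fin 2) ≃ᵐ ℝ × ℝ :=
  (MeasurableEquiv.toLp 2 (Fin 2 → ℝ)).symm.trans (MeasurableEquiv.piFinTwo fun _ => ℝ)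

lemma chi_measurePreserving : MeasurePreserving chi volume volume :=
  (volume_preserving_piFinTwo fun _ => ℝ).comp
    (EuclideanSpace.volume_preserving_symm_measurableEquiv_toLp (Fin 2))

lemma chi_symm_measurePreserving : MeasurePreserving chi.symm volume volume :=
  chi_measurePreserving.symm chi

lemma chi_apply (y : EuclideanSpace ℝ (Fin 2)) : chi y = (y 0, y 1) := rfl

lemma chi_symm_apply_zero (p : ℝ × ℝ) : chi.symm p 0 = p.1 := rfl
lemma chi_symm_apply_one (p : ℝ × ℝ) : chi.symm p 1 = p.2 := rfl

/-- The closed standard triangle in `EuclideanSpace ℝ (Fin 2)`. -/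
def stdTriE : Set (EuclideanSpace ℝ (Fin 2)) := {y | 0 ≤ y 0 ∧ 0 ≤ y 1 ∧ y 0 + y 1 ≤ 1}

lemma stdTriE_eq_preimage : stdTriE = chi ⁻¹' stdTri2 := rfl

lemma stdTriE_measurableSet : MeasurableSet stdTriE :=
  stdTriE_eq_preimage ▸ chi.measurable stdTri2_measurableSet

lemma chi_symm_preimage : chi.symm ⁻¹' stdTriE = stdTri2 := by
  rw [stdTriE_eq_preimage, ← Set.preimage_comp]
  simp [Function.comp_def]

lemma volume_stdTriE_toReal : (volume stdTriE).toReal = 1 / 2 := by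
  have h2 : (volume stdTri2).toReal = 1 / 2 := by
    have := integral_stdTri2 1 0 0
    simpa [setIntegral_const, Measure.real] using this
  rw [stdTriE_eq_preimage, chi_measurePreserving.measure_preimage
    stdTri2_measurableSet.nullMeasurableSet]
  exact h2


lemma euclidean_fin2_decomp (y : EuclideanSpace ℝ (Fin 2)) :
    y = y 0 • EuclideanSpace.single 0 (1:ℝ) + y 1 • EuclideanSpace.single 1 (1:ℝ) := by
  ext i
  fin_cases i <;>
    simp [EuclideanSpace.single_apply]

lemma affine_decomp (g : EuclideanSpace ℝ (Fin 2) →ᵃ[ℝ] ℝ)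
    (y : EuclideanSpace ℝ (Fin 2)) : g y = g.linear y + g 0 := by
  conv_lhs => rw [show y = y +ᵥ (0 : EuclideanSpace ℝ (Fin 2)) from (add_zero y).symm]
  rw [g.map_vadd]
  rfl

lemma integral_affine_stdTriE (g : EuclideanSpace ℝ (Fin 2) →ᵃ[ℝ] ℝ) :
    ∫ y in stdTriE, g y ∂volume
      = (volume stdTriE).toReal *
        ((g 0 + g (EuclideanSpace.single 0 1) + g (EuclideanSpace.single 1 1)) / 3) := by
  have hform : ∀ p : ℝ × ℝ, g (chi.symm p)
      = g 0 + g.linear (EuclideanSpace.single 0 1) * p.1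
          + g.linear (EuclideanSpace.single 1 1) * p.2 := by
    intro p
    rw [affine_decomp]
    conv_lhs => rw [euclidean_fin2_decomp (chi.symm p)]
    rw [map_add, _root_.map_smul, _root_.map_smul, chi_symm_apply_zero, chi_symm_apply_one,
      smul_eq_mul, smul_eq_mul]
    ring
  rw [← chi_symm_measurePreserving.setIntegral_preimage_emb
      chi.symm.measurableEmbedding (fun y => g y) stdTriE, chi_symm_preimage]
  simp_rw [hform]
  rw [integral_stdTri2, volume_stdTriE_toReal,
    affine_decomp g (EuclideanSpace.single 0 1), affine_decomp g (EuclideanSpace.single 1 1)]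
  ring


/-- Vertices of the standard triangle in the Euclidean plane. -/
noncomputable def stdVerts : Fin 3 → EuclideanSpace ℝ (Fin 2) :=
  ![0, EuclideanSpace.single 0 1, EuclideanSpace.single 1 1]

lemma convex_stdTriE : Convex ℝ stdTriE := by
  rintro x ⟨hx0, hx1, hx2⟩ y ⟨hy0, hy1, hy2⟩ a b ha hb hab
  refine ⟨?_, ?_, ?_⟩ <;> simp only [PiLp.add_apply, PiLp.smul_apply, smul_eq_mul] <;> nlinarith

lemma stdTriE_eq_hull : convexHull ℝ (range stdVerts) = stdTriE := by
  apply Subset.antisymm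
  · apply convexHull_min _ convex_stdTriE
    rintro x ⟨i, rfl⟩
    fin_cases i <;> constructor <;>
      norm_num [stdVerts, EuclideanSpace.single_apply] <;>
      norm_num [stdVerts, EuclideanSpace.single_apply]
  · rintro y ⟨hy0, hy1, hy2⟩
    have hsum1 : ∑ i, ![1 - y 0 - y 1, y 0, y 1] i = 1 := by
      simp [Fin.sum_univ_three]; ring
    have h := Finset.centerMass_mem_convexHull (Finset.univ : Finset (Fin 3))
      (w := ![1 - y 0 - y 1, y 0, y 1]) (z := stdVerts)
      (by intro i _; fin_cases i <;> simp <;> linarith)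
      (by rw [hsum1]; norm_num)
      (by intro i _; exact Set.mem_range_self i)
    rw [Finset.centerMass_eq_of_sum_1 _ _ hsum1, Fin.sum_univ_three] at h
    simp only [Matrix.cons_val_zero, Matrix.cons_val_one, Matrix.head_cons,
      Matrix.cons_val_two, Matrix.tail_cons, stdVerts, smul_zero, zero_add] at h
    have hy : y 0 • EuclideanSpace.single 0 (1:ℝ) + y 1 • EuclideanSpace.single 1 (1:ℝ) = y := by
      ext i
      fin_cases i <;> simp [EuclideanSpace.single_apply]
    rwa [hy] at h


/-- Integral of an affine map over a 2-dimensional triangle w.r.t. Lebesgue measure. -/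
theorem integral_affine_triangle2 (q : Fin 3 → EuclideanSpace ℝ (Fin 2))
    (hq : AffineIndependent ℝ q) (g : EuclideanSpace ℝ (Fin 2) →ᵃ[ℝ] ℝ) :
    ∫ y in convexHull ℝ (range q), g y ∂volume
      = (volume (convexHull ℝ (range q))).toReal * ((g (q 0) + g (q 1) + g (q 2)) / 3) := by
  classical
  -- linear independence of the edge vectors
  have hli : LinearIndependent ℝ ![q 1 - q 0, q 2 - q 0] := by
    have h := (affineIndependent_iff_linearIndependent_vsub ℝ q 0).mp hq
    have h2 := (linearIndependent_equiv (finSuccAboveEquiv (0 : Fin 3))).mpr h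
    have heq : ((fun i : {x : Fin 3 // x ≠ 0} => q ↑i -ᵥ q 0) ∘ (finSuccAboveEquiv (0 : Fin 3)))
        = ![q 1 - q 0, q 2 - q 0] := by
      funext i
      fin_cases i <;> simp [finSuccAboveEquiv, Fin.succAbove, vsub_eq_sub]
    rwa [heq] at h2
  -- the linear equivalence sending the standard basis to the edge vectors
  set bq : Module.Basis (Fin 2) ℝ (EuclideanSpace ℝ (Fin 2)) :=
    basisOfLinearIndependentOfCardEqFinrank hli (by simp) with hbq
  set bstd : Module.Basis (Fin 2) ℝ (EuclideanSpace ℝ (Fin 2)) :=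
    (EuclideanSpace.basisFun (Fin 2) ℝ).toBasis with hbstd
  set M : EuclideanSpace ℝ (Fin 2) ≃ₗ[ℝ] EuclideanSpace ℝ (Fin 2) :=
    bstd.equiv bq (Equiv.refl _) with hM
  have hM0 : M (EuclideanSpace.single 0 1) = q 1 - q 0 := by
    have := bstd.equiv_apply (i := 0) (b' := bq) (e := Equiv.refl _)
    simpa [hbstd, hbq, coe_basisOfLinearIndependentOfCardEqFinrank,
      EuclideanSpace.basisFun_apply] using this
  have hM1 : M (EuclideanSpace.single 1 1) = q 2 - q 0 := by
    have := bstd.equiv_apply (i := 1) (b' := bq) (e := Equiv.refl _)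
    simpa [hbstd, hbq, coe_basisOfLinearIndependentOfCardEqFinrank,
      EuclideanSpace.basisFun_apply] using this
  -- the affine map
  set A : EuclideanSpace ℝ (Fin 2) →ᵃ[ℝ] EuclideanSpace ℝ (Fin 2) :=
    { toFun := fun y => M y + q 0
      linear := (M : EuclideanSpace ℝ (Fin 2) →ₗ[ℝ] EuclideanSpace ℝ (Fin 2))
      map_vadd' := by
        intro p v
        simp only [LinearEquiv.coe_coe, map_add, vadd_eq_add]
        abel } with hA
  have hAapp : ∀ y, A y = M y + q 0 := fun y => rfl
  have hAq : A ∘ stdVerts = q := by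
    funext i
    fin_cases i <;>
      simp [hAapp, stdVerts, hM0, hM1, sub_add_cancel]
  have himg : A '' stdTriE = convexHull ℝ (range q) := by
    rw [← stdTriE_eq_hull, AffineMap.image_convexHull, ← Set.range_comp, hAq]
  -- change of variables
  set CM : EuclideanSpace ℝ (Fin 2) →L[ℝ] EuclideanSpace ℝ (Fin 2) :=
    LinearMap.toContinuousLinearMap (M : EuclideanSpace ℝ (Fin 2) →ₗ[ℝ] EuclideanSpace ℝ (Fin 2))
    with hCM
  have hder : ∀ x ∈ stdTriE, HasFDerivWithinAt A CM stdTriE x := by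
    intro x _
    exact ((CM.hasFDerivAt.add_const (q 0)).hasFDerivWithinAt)
  have hinj : InjOn A stdTriE := by
    intro x _ y _ hxy
    have : M x = M y := by
      have := hxy
      simp only [hAapp] at this
      exact add_right_cancel this
    exact M.injective this
  have hcov := integral_image_eq_integral_abs_det_fderiv_smul volume stdTriE_measurableSet
    hder hinj (fun y => g y)
  have hcov1 := integral_image_eq_integral_abs_det_fderiv_smul volume stdTriE_measurableSet
    hder hinj (fun _ => (1 : ℝ))
  rw [himg] at hcov hcov1
  -- compute both sides
  set d : ℝ := |CM.det| with hd
  have hboundedq : (volume (convexHull ℝ (range q))) ≠ ⊤ := by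
    have : IsCompact (convexHull ℝ (range q)) :=
      (Set.finite_range q).isCompact_convexHull ℝ
    exact this.measure_lt_top.ne
  have hvol : (volume (convexHull ℝ (range q))).toReal = d * (volume stdTriE).toReal := by
    have h1 : ∫ x in convexHull ℝ (range q), (1 : ℝ) ∂volume
        = (volume (convexHull ℝ (range q))).toReal := by
      simp [setIntegral_const, Measure.real]
    have h2 : ∫ y in stdTriE, d • (1 : ℝ) ∂volume = d * (volume stdTriE).toReal := by
      simp [setIntegral_const, smul_eq_mul, Measure.real]
      ring
    rw [← h1, hcov1, h2]
  have hcomp : ∀ y, g (A y) = (g.comp A) y := fun _ => rfl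
  calc ∫ y in convexHull ℝ (range q), g y ∂volume
      = ∫ y in stdTriE, d • g (A y) ∂volume := hcov
    _ = d * ∫ y in stdTriE, (g.comp A) y ∂volume := by
        simp_rw [hcomp]
        rw [integral_smul, smul_eq_mul]
    _ = d * ((volume stdTriE).toReal
          * (((g.comp A) 0 + (g.comp A) (EuclideanSpace.single 0 1)
            + (g.comp A) (EuclideanSpace.single 1 1)) / 3)) := by
        rw [integral_affine_stdTriE]
    _ = (volume (convexHull ℝ (range q))).toReal * ((g (q 0) + g (q 1) + g (q 2)) / 3) := by
        have e0 : (g.comp A) 0 = g (q 0) := by simp [AffineMap.comp_apply, hAapp]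
        have e1 : (g.comp A) (EuclideanSpace.single 0 1) = g (q 1) := by
          simp [AffineMap.comp_apply, hAapp, hM0]
        have e2 : (g.comp A) (EuclideanSpace.single 1 1) = g (q 2) := by
          simp [AffineMap.comp_apply, hAapp, hM1]
        rw [e0, e1, e2, hvol]
        ring


lemma hpi_fin2 : (μH[(2:ℝ)] : Measure (Fin 2 → ℝ)) = volume := by
  have := hausdorffMeasure_pi_real (ι := Fin 2)
  norm_num at this
  exact this

lemma lipschitz_equiv_symm : ∃ C : ℝ≥0, LipschitzWith C ((WithLp.equiv 2 (Fin 2 → ℝ)).symm) :=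
  ⟨_, (PiLp.antilipschitzWith_ofLp 2 (fun _ : Fin 2 => ℝ)).to_rightInverse
    (Equiv.rightInverse_symm _)⟩

instance : IsFiniteMeasureOnCompacts (μH[(2:ℝ)] : Measure (EuclideanSpace ℝ (Fin 2))) := by
  constructor
  intro K hK
  obtain ⟨C, hC⟩ := lipschitz_equiv_symm
  have himg : K = (WithLp.equiv 2 (Fin 2 → ℝ)).symm '' ((WithLp.equiv 2 (Fin 2 → ℝ)) '' K) := by
    rw [Set.image_image]; simp
  have hle := hC.hausdorffMeasure_image_le (by norm_num : (0:ℝ) ≤ 2)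
      ((WithLp.equiv 2 (Fin 2 → ℝ)) '' K)
  rw [← himg, hpi_fin2] at hle
  have hKc : IsCompact ((WithLp.equiv 2 (Fin 2 → ℝ)) '' K) :=
    hK.image (PiLp.lipschitzWith_ofLp 2 _).continuous
  calc μH[(2:ℝ)] K ≤ _ := hle
    _ < ⊤ := by
      exact ENNReal.mul_lt_top
        (ENNReal.rpow_lt_top_of_nonneg (by norm_num) (by simp)) hKc.measure_lt_top

instance : Measure.IsOpenPosMeasure (μH[(2:ℝ)] : Measure (EuclideanSpace ℝ (Fin 2))) := by
  constructor
  intro U hU hne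
  obtain ⟨C, hC⟩ := lipschitz_equiv_symm
  have h1 : volume ((WithLp.equiv 2 (Fin 2 → ℝ)) '' U) ≠ 0 := by
    have hop : IsOpen ((WithLp.equiv 2 (Fin 2 → ℝ)) '' U) := by
      rw [Equiv.image_eq_preimage_symm]
      exact hU.preimage hC.continuous
    exact hop.measure_ne_zero volume (hne.image _)
  have hle := (PiLp.lipschitzWith_ofLp 2 (fun _ : Fin 2 => ℝ)).hausdorffMeasure_image_le
    (by norm_num : (0:ℝ) ≤ 2) U
  rw [hpi_fin2] at hle
  intro h0
  rw [h0] at hle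
  simp at hle
  exact h1 hle

instance : (μH[(2:ℝ)] : Measure (EuclideanSpace ℝ (Fin 2))).IsAddHaarMeasure := ⟨⟩

lemma hausdorff_eq_smul_volume :
    (μH[(2:ℝ)] : Measure (EuclideanSpace ℝ (Fin 2)))
      = (Measure.addHaarScalarFactor (μH[(2:ℝ)] : Measure (EuclideanSpace ℝ (Fin 2)))
          (volume : Measure (EuclideanSpace ℝ (Fin 2))) : ℝ≥0∞)
        • (volume : Measure (EuclideanSpace ℝ (Fin 2))) := by
  have := Measure.isAddLeftInvariant_eq_smul
    (μH[(2:ℝ)] : Measure (EuclideanSpace ℝ (Fin 2)))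
    (volume : Measure (EuclideanSpace ℝ (Fin 2)))
  exact this


end Aux

/-- Lemma 1, 3D instance: the integral of an affine map over a triangle spanned
by three affinely independent points of `ℝ³`, with respect to the 2-dimensional
Hausdorff measure, equals the area of the triangle times the arithmetic mean of
the three vertex values. -/
theorem integral_affineMap_triangle_eq_area_mul_mean
    (w : Fin 3 → EuclideanSpace ℝ (Fin 3))
    (hw : AffineIndependent ℝ w)
    (u : EuclideanSpace ℝ (Fin 3) →ᵃ[ℝ] ℝ) :
    ∫ x in convexHull ℝ (Set.range w), u x ∂(μH[(2 : ℝ)]) =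
      (μH[(2 : ℝ)] (convexHull ℝ (Set.range w))).toReal *
        ((u (w 0) + u (w 1) + u (w 2)) / 3) := by
  classical
  set V : Submodule ℝ (EuclideanSpace ℝ (Fin 3)) := vectorSpan ℝ (Set.range w) with hV
  have hrank : Module.finrank ℝ V = 2 := hw.finrank_vectorSpan (by simp)
  set J : V ≃ₗᵢ[ℝ] EuclideanSpace ℝ (Fin 2) :=
    ((stdOrthonormalBasis ℝ V).reindex (finCongr hrank)).repr with hJ
  -- the isometric affine chart
  set F : EuclideanSpace ℝ (Fin 2) →ᵃ[ℝ] EuclideanSpace ℝ (Fin 3) :=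
    { toFun := fun y => w 0 + (J.symm y : EuclideanSpace ℝ (Fin 3))
      linear := V.subtype ∘ₗ (J.symm.toLinearEquiv :
        EuclideanSpace ℝ (Fin 2) ≃ₗ[ℝ] V).toLinearMap
      map_vadd' := by
        intro p v
        simp only [LinearMap.coe_comp, Function.comp_apply, LinearEquiv.coe_coe,
          LinearIsometryEquiv.coe_toLinearEquiv, vadd_eq_add, map_add,
          Submodule.coe_subtype, Submodule.coe_add]
        abel } with hF
  have hFapp : ∀ y, F y = w 0 + (J.symm y : EuclideanSpace ℝ (Fin 3)) := fun _ => rfl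
  have hFiso : Isometry (F : EuclideanSpace ℝ (Fin 2) → EuclideanSpace ℝ (Fin 3)) := by
    apply Isometry.of_dist_eq
    intro y z
    rw [hFapp, hFapp, dist_add_left, ← Subtype.dist_eq (J.symm y) (J.symm z)]
    exact J.symm.dist_map y z
  -- preimages of the vertices
  have hmem : ∀ i, w i - w 0 ∈ V := fun i => by
    rw [hV, ← vsub_eq_sub]
    exact vsub_mem_vectorSpan ℝ (mem_range_self i) (mem_range_self 0)
  set q : Fin 3 → EuclideanSpace ℝ (Fin 2) := fun i => J ⟨w i - w 0, hmem i⟩ with hqdef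
  have hFq : ∀ i, F (q i) = w i := by
    intro i
    rw [hFapp, hqdef]
    simp only [LinearIsometryEquiv.symm_apply_apply]
    simp
  have hq : AffineIndependent ℝ q := by
    apply AffineIndependent.of_comp F
    have : (F ∘ q : Fin 3 → EuclideanSpace ℝ (Fin 3)) = w := funext fun i => hFq i
    rwa [this]
  have himg : (F : EuclideanSpace ℝ (Fin 2) → EuclideanSpace ℝ (Fin 3)) ''
      (convexHull ℝ (range q)) = convexHull ℝ (Set.range w) := by
    rw [F.image_convexHull, ← Set.range_comp, show (F ∘ q : Fin 3 → EuclideanSpace ℝ (Fin 3)) = w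
      from funext fun i => hFq i]
  -- measurability data
  have hq_compact : IsCompact (convexHull ℝ (range q)) := (finite_range q).isCompact_convexHull ℝ
  have hs_compact : IsCompact (convexHull ℝ (Set.range w)) :=
    (finite_range w).isCompact_convexHull ℝ
  have hs_meas : MeasurableSet (convexHull ℝ (Set.range w)) := hs_compact.measurableSet
  -- measure of the triangle
  have hmeas_img : μH[(2:ℝ)] (convexHull ℝ (Set.range w))
      = μH[(2:ℝ)] (convexHull ℝ (range q)) := by
    rw [← himg]
    exact hFiso.hausdorffMeasure_image (Or.inl (by norm_num)) _
  -- rewrite the integral through the chart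
  have hmap := hFiso.map_hausdorffMeasure (d := 2) (Or.inl (by norm_num))
  have hint : ∫ x in convexHull ℝ (Set.range w), u x ∂(μH[(2 : ℝ)])
      = ∫ y in convexHull ℝ (range q), u (F y) ∂(μH[(2 : ℝ)]) := by
    have hsub : convexHull ℝ (Set.range w)
        ⊆ range (F : EuclideanSpace ℝ (Fin 2) → EuclideanSpace ℝ (Fin 3)) := by
      rw [← himg]; exact image_subset_range _ _
    have hemb : MeasurableEmbedding (F : EuclideanSpace ℝ (Fin 2) → EuclideanSpace ℝ (Fin 3)) :=
      hFiso.isClosedEmbedding.measurableEmbedding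
    have : ∫ x in convexHull ℝ (Set.range w), u x ∂(μH[(2 : ℝ)])
        = ∫ x in convexHull ℝ (Set.range w), u x
            ∂((μH[(2 : ℝ)]).restrict (range (F : EuclideanSpace ℝ (Fin 2)
              → EuclideanSpace ℝ (Fin 3)))) := by
      rw [Measure.restrict_restrict hs_meas, inter_eq_self_of_subset_left hsub]
    rw [this, ← hmap, Measure.restrict_map hemb.measurable hs_meas, hemb.integral_map,
      show (F : EuclideanSpace ℝ (Fin 2) → EuclideanSpace ℝ (Fin 3)) ⁻¹'
          (convexHull ℝ (Set.range w)) = convexHull ℝ (range q) by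
        rw [← himg, preimage_image_eq _ hFiso.injective]]
  rw [hint, hmeas_img]
  -- pass to Lebesgue measure on the plane
  set c : ℝ≥0 := Measure.addHaarScalarFactor (μH[(2:ℝ)] : Measure (EuclideanSpace ℝ (Fin 2)))
    (volume : Measure (EuclideanSpace ℝ (Fin 2))) with hc
  rw [hausdorff_eq_smul_volume]
  rw [Measure.restrict_smul, integral_smul_measure, Measure.smul_apply]
  have := integral_affine_triangle2 q hq (u.comp F)
  have hvals : ∀ i, (u.comp F) (q i) = u (w i) := fun i => by
    simp [AffineMap.comp_apply, hFq i]
  rw [show (fun y => u (F y)) = fun y => (u.comp F) y from rfl, this,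
    hvals 0, hvals 1, hvals 2]
  simp only [smul_eq_mul, ENNReal.toReal_mul, ENNReal.coe_toReal]
  ring
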